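/- Let (Ω, P) be a probability space, A a finite measure space of actions with measure da, α̃ > 0, and Q : Ω × A → ℝ jointly measurable such that for each a, Q(·,a) is sub-Gaussian with mean μ(a) and variance proxy σ²(a), and the relevant integrals are finite. Then E_ω[ α̃ · log( ∫_A exp(Q(ω,a)/α̃) da ) ] ≤ α̃ · log( ∫_A exp( μ(a)/α̃ + σ²(a)/(2α̃²) ) da ). -/

import Mathlib

open MeasureTheory Real

/-- Core of the overestimation theorem: if `Q(·,a)` is sub-Gaussian with
mean `μ(a)` and variance proxy `σ²(a)` for each action `a`, then
`E_ω[α̃ log ∫ exp(Q(ω,a)/α̃) da] ≤ α̃ log ∫ exp(μ(a)/α̃ + σ²(a)/(2α̃²)) da`. -/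
theorem subGaussian_soft_backup_bound {Ω A : Type*} [MeasurableSpace Ω] [MeasurableSpace A]
    (P : Measure Ω) [IsProbabilityMeasure P] (ν : Measure A) [IsFiniteMeasure ν]
    (alpha : ℝ) (halpha : 0 < alpha) (Q : Ω → A → ℝ) (μ σ2 : A → ℝ)
    (hmeas : Measurable (Function.uncurry Q)) (hμ : Measurable μ) (hσ2 : Measurable σ2)
    (hmean : ∀ a, ∫ ω, Q ω a ∂P = μ a)
    (hsub : ∀ a, ∀ l : ℝ,
      ∫ ω, Real.exp (l * Q ω a) ∂P ≤ Real.exp (l * μ a + l ^ 2 * σ2 a / 2))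
    (hint : Integrable (Function.uncurry fun ω a => Real.exp (Q ω a / alpha)) (P.prod ν))
    (hlogint : Integrable (fun ω => Real.log (∫ a, Real.exp (Q ω a / alpha) ∂ν)) P)
    (hrhs : Integrable (fun a => Real.exp (μ a / alpha + σ2 a / (2 * alpha ^ 2))) ν) :
    ∫ ω, alpha * Real.log (∫ a, Real.exp (Q ω a / alpha) ∂ν) ∂P
      ≤ alpha * Real.log (∫ a, Real.exp (μ a / alpha + σ2 a / (2 * alpha ^ 2)) ∂ν) := by
  set f : Ω → ℝ := fun ω => ∫ a, Real.exp (Q ω a / alpha) ∂ν with hf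
  rcases eq_or_ne ν 0 with hν | hν
  · simp [hf, hν]
  have hνpos : 0 < ν Set.univ := by
    rw [Measure.measure_univ_pos]; exact hν
  have haeInt : ∀ᵐ ω ∂P, Integrable (fun a => Real.exp (Q ω a / alpha)) ν :=
    hint.prod_right_ae
  have hfpos : ∀ᵐ ω ∂P, 0 < f ω := by
    filter_upwards [haeInt] with ω hω
    rw [hf]
    rw [integral_pos_iff_support_of_nonneg_ae
      (Filter.Eventually.of_forall fun a => (Real.exp_pos _).le) hω]
    have : (Function.support fun a => Real.exp (Q ω a / alpha)) = Set.univ := by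
      ext a; simp [Function.support, (Real.exp_pos _).ne']
    rw [this]; exact hνpos
  have hfint : Integrable f P := hint.integral_prod_left
  -- positivity of ∫ f dP
  have hIfpos : 0 < ∫ ω, f ω ∂P := by
    rw [integral_pos_iff_support_of_nonneg_ae (hfpos.mono fun ω h => h.le) hfint]
    by_contra h
    have hnull : P (Function.support f) = 0 := by
      have := (measure_lt_top P (Function.support f)).ne
      push_neg at h
      exact le_antisymm h zero_le
    have hzero : ∀ᵐ ω ∂P, f ω = 0 := by
      refine measure_mono_null ?_ hnull
      intro ω hω
      simpa [Function.mem_support] using hω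
    obtain ⟨ω, h1, h2⟩ := (hfpos.and hzero).exists
    rw [h2] at h1; exact lt_irrefl 0 h1
  -- Jensen: ∫ log f ≤ log ∫ f  (via convexity of exp)
  have hjensen : ∫ ω, Real.log (f ω) ∂P ≤ Real.log (∫ ω, f ω ∂P) := by
    have hexp : Real.exp (∫ ω, Real.log (f ω) ∂P) ≤ ∫ ω, f ω ∂P := by
      have h1 : Real.exp (∫ ω, Real.log (f ω) ∂P)
          ≤ ∫ ω, Real.exp (Real.log (f ω)) ∂P := by
        refine convexOn_exp.map_integral_le continuous_exp.continuousOn isClosed_univ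
          (Filter.Eventually.of_forall fun _ => Set.mem_univ _) hlogint ?_
        refine hfint.congr ?_
        filter_upwards [hfpos] with ω hω
        simp [Real.exp_log hω]
      have h2 : ∫ ω, Real.exp (Real.log (f ω)) ∂P = ∫ ω, f ω ∂P := by
        refine integral_congr_ae ?_
        filter_upwards [hfpos] with ω hω
        simp [Real.exp_log hω]
      linarith
    calc ∫ ω, Real.log (f ω) ∂P
        = Real.log (Real.exp (∫ ω, Real.log (f ω) ∂P)) := (Real.log_exp _).symm
      _ ≤ Real.log (∫ ω, f ω ∂P) := Real.log_le_log (Real.exp_pos _) hexp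
  -- Fubini + sub-Gaussian bound on ∫ f dP
  have hswap : ∫ ω, f ω ∂P
      = ∫ a, ∫ ω, Real.exp (Q ω a / alpha) ∂P ∂ν :=
    integral_integral_swap hint
  have hbound : ∫ a, ∫ ω, Real.exp (Q ω a / alpha) ∂P ∂ν
      ≤ ∫ a, Real.exp (μ a / alpha + σ2 a / (2 * alpha ^ 2)) ∂ν := by
    refine integral_mono hint.integral_prod_right hrhs fun a => ?_
    have := hsub a (1 / alpha)
    have e1 : ∀ x : ℝ, (1 / alpha) * x = x / alpha := fun x => by ring
    have e2 : (1 / alpha) ^ 2 * σ2 a / 2 = σ2 a / (2 * alpha ^ 2) := by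
      rw [div_pow, one_pow]
      rw [div_mul_eq_mul_div, one_mul, div_div, mul_comm]
    calc ∫ ω, Real.exp (Q ω a / alpha) ∂P
        = ∫ ω, Real.exp ((1 / alpha) * Q ω a) ∂P := by simp_rw [e1]
      _ ≤ Real.exp ((1 / alpha) * μ a + (1 / alpha) ^ 2 * σ2 a / 2) := hsub a _
      _ = Real.exp (μ a / alpha + σ2 a / (2 * alpha ^ 2)) := by rw [e1, e2]
  -- combine
  rw [integral_const_mul]
  apply mul_le_mul_of_nonneg_left _ halpha.le
  calc ∫ ω, Real.log (f ω) ∂P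
      ≤ Real.log (∫ ω, f ω ∂P) := hjensen
    _ ≤ Real.log (∫ a, Real.exp (μ a / alpha + σ2 a / (2 * alpha ^ 2)) ∂ν) :=
        Real.log_le_log hIfpos (hswap.trans_le hbound)
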